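/- Generation lemma for abstractions: for any context Γ, term t, and type T, if Γ ⊢ λx.t : T is derivable in Add, then there exist a unit type U and a type R such that Γ, x:U ⊢ t : R is derivable in Add and U→R ≼ T. -/

import Mathlib

set_option maxHeartbeats 1000000

/-! ## Terms of the non-deterministic call-by-value λ-calculus (de Bruijn indices) -/

inductive Tm : Type
  | var : ℕ → Tm
  | lam : Tm → Tm
  | app : Tm → Tm → Tm
  | add : Tm → Tm → Tm
  | zero : Tm
  deriving DecidableEq

namespace Tm

/-- Values: variables and abstractions. -/
inductive IsValue : Tm → Prop
  | var (n : ℕ) : IsValue (var n)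
  | lam (t : Tm) : IsValue (lam t)

/-- de Bruijn shifting: add `d` to every variable index `≥ c`. -/
def shift (d c : ℕ) : Tm → Tm
  | var n => if n < c then var n else var (n + d)
  | lam t => lam (shift d (c + 1) t)
  | app t u => app (shift d c t) (shift d c u)
  | add t u => add (shift d c t) (shift d c u)
  | zero => zero

/-- Capture-avoiding substitution of the variable `k` by `v` (removing the binder). -/
def subst (k : ℕ) (v : Tm) : Tm → Tm
  | var n => if n = k then shift k 0 v else if k < n then var (n - 1) else var n
  | lam t => lam (subst (k + 1) v t)
  | app t u => app (subst k v t) (subst k v u)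
  | add t u => add (subst k v t) (subst k v u)
  | zero => zero

/-- `ClosedUnder k t`: every free variable of `t` has index `< k`. -/
def ClosedUnder (k : ℕ) : Tm → Prop
  | var n => n < k
  | lam t => ClosedUnder (k + 1) t
  | app t u => ClosedUnder k t ∧ ClosedUnder k u
  | add t u => ClosedUnder k t ∧ ClosedUnder k u
  | zero => True

/-- Closed terms. -/
def Closed (t : Tm) : Prop := ClosedUnder 0 t

end Tm

open Tm

/-- The AC-equivalence on terms: the least congruence making `+`
associative and commutative (terms are considered modulo `Aeq`). -/
inductive Aeq : Tm → Tm → Prop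
  | refl (t : Tm) : Aeq t t
  | symm : Aeq t u → Aeq u t
  | trans : Aeq t u → Aeq u s → Aeq t s
  | comm (t u : Tm) : Aeq (.add t u) (.add u t)
  | assoc (t u s : Tm) : Aeq (.add t (.add u s)) (.add (.add t u) s)
  | lamCongr : Aeq t t' → Aeq (.lam t) (.lam t')
  | appCongr : Aeq t t' → Aeq u u' → Aeq (.app t u) (.app t' u')
  | addCongr : Aeq t t' → Aeq u u' → Aeq (.add t u) (.add t' u')

/-- One-step reduction (the five rewrite rules plus β, closed under all
contexts, and performed modulo the AC-equivalence of terms). -/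
inductive Step : Tm → Tm → Prop
  | distrRight (t u s : Tm) : Step (.app (.add t u) s) (.add (.app t s) (.app u s))
  | distrLeft (t u s : Tm) : Step (.app t (.add u s)) (.add (.app t u) (.app t s))
  | zeroApp (t : Tm) : Step (.app .zero t) .zero
  | appZero (t : Tm) : Step (.app t .zero) .zero
  | addZero (t : Tm) : Step (.add t .zero) t
  | beta (t v : Tm) : IsValue v → Step (.app (.lam t) v) (Tm.subst 0 v t)
  | appLeft : Step t t' → Step (.app t u) (.app t' u)
  | appRight : Step u u' → Step (.app t u) (.app t u')
  | addLeft : Step t t' → Step (.add t u) (.add t' u)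
  | addRight : Step u u' → Step (.add t u) (.add t u')
  | lamCongr : Step t t' → Step (.lam t) (.lam t')
  | ac : Aeq t t' → Step t' u' → Aeq u' u → Step t u

/-- Strong normalisation of a term: accessibility of the inverse reduction. -/
def SN (t : Tm) : Prop := Acc (fun a b => Step b a) t

/-- The set of strongly normalising closed terms. -/
def SNset : Set Tm := {t | Closed t ∧ SN t}

/-- Pseudo-values: abstractions and sums of pseudo-values. -/
inductive PseudoValue : Tm → Prop
  | lam (t : Tm) : PseudoValue (.lam t)
  | add : PseudoValue t → PseudoValue u → PseudoValue (.add t u)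

/-- Neutral terms: closed terms that are not pseudo-values. -/
def Neutral (t : Tm) : Prop := Closed t ∧ ¬ PseudoValue t

/-- The set of one-step reducts of `t`. -/
def Red (t : Tm) : Set Tm := {u | Step t u}

/-- The set of reducts (in any number of steps, including zero) of terms of `S`. -/
def RedStar (S : Set Tm) : Set Tm := {u | ∃ t ∈ S, Relation.ReflTransGen Step t u}

/-- The closure of a set of terms under (CR3). -/
inductive Clo (S : Set Tm) : Tm → Prop
  | base {t : Tm} : t ∈ S → Clo S t
  | step {t : Tm} : Neutral t → (∀ u, Step t u → Clo S u) → Clo S t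

/-- `clo S`: the least set containing `S` and closed under (CR3). -/
def clo (S : Set Tm) : Set Tm := {t | Clo S t}

/-- Reducibility candidates. -/
structure IsCandidate (A : Set Tm) : Prop where
  cr1 : A ⊆ SNset
  cr2 : ∀ t ∈ A, Red t ⊆ A
  cr3 : ∀ t, Neutral t → Red t ⊆ A → t ∈ A

/-- The arrow operator on sets of closed terms. -/
def CArrow (A B : Set Tm) : Set Tm := {t | Closed t ∧ ∀ u ∈ A, Tm.app t u ∈ B}

/-- The sum of two sets of (AC-classes of) terms. -/
def CSum (A B : Set Tm) : Set Tm := {s | ∃ t ∈ A, ∃ u ∈ B, Aeq s (Tm.add t u)}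

/-- The ⊞ operator on reducibility candidates. -/
def CPlus (A B : Set Tm) : Set Tm := clo (CSum A B ∪ A ∪ B)

/-! ## Types of the Add type system -/

mutual
  /-- Unit types. -/
  inductive UTy : Type
    | var : ℕ → UTy
    | arrow : UTy → Ty → UTy
    | all : UTy → UTy

  /-- Types. -/
  inductive Ty : Type
    | unit : UTy → Ty
    | add : Ty → Ty → Ty
    | zero : Ty
end

mutual
  /-- Shifting of type variables in unit types. -/
  def UTy.shift (d c : ℕ) : UTy → UTy
    | .var n => if n < c then .var n else .var (n + d)
    | .arrow U T => .arrow (UTy.shift d c U) (Ty.shift d c T)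
    | .all U => .all (UTy.shift d (c + 1) U)

  /-- Shifting of type variables in types. -/
  def Ty.shift (d c : ℕ) : Ty → Ty
    | .unit U => .unit (UTy.shift d c U)
    | .add T R => .add (Ty.shift d c T) (Ty.shift d c R)
    | .zero => .zero
end

mutual
  /-- Substitution of the (bound) type variable `k` by `V` in a unit type. -/
  def UTy.subst (k : ℕ) (V : UTy) : UTy → UTy
    | .var n => if n = k then UTy.shift k 0 V else if k < n then .var (n - 1) else .var n
    | .arrow U T => .arrow (UTy.subst k V U) (Ty.subst k V T)
    | .all U => .all (UTy.subst (k + 1) V U)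

  /-- Substitution of the (bound) type variable `k` by `V` in a type. -/
  def Ty.subst (k : ℕ) (V : UTy) : Ty → Ty
    | .unit U => .unit (UTy.subst k V U)
    | .add T R => .add (Ty.subst k V T) (Ty.subst k V R)
    | .zero => .zero
end

/-- Iterated substitution `U[V⃗/X⃗]` for a unit type under `|Vs|` quantifiers. -/
def UTy.msubst (Vs : List UTy) (U : UTy) : UTy := Vs.foldl (fun A V => UTy.subst 0 V A) U

/-- Iterated substitution `T[V⃗/X⃗]` for a type under `|Vs|` quantifiers. -/
def Ty.msubst (Vs : List UTy) (T : Ty) : Ty := Vs.foldl (fun A V => Ty.subst 0 V A) T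

mutual
  /-- Substitution of the free type variable `X` (seen at depth `c`) by `V` in a unit type. -/
  def UTy.replAux (X : ℕ) (V : UTy) (c : ℕ) : UTy → UTy
    | .var n => if n = X + c then UTy.shift c 0 V else .var n
    | .arrow U T => .arrow (UTy.replAux X V c U) (Ty.replAux X V c T)
    | .all U => .all (UTy.replAux X V (c + 1) U)

  /-- Substitution of the free type variable `X` (seen at depth `c`) by `V` in a type. -/
  def Ty.replAux (X : ℕ) (V : UTy) (c : ℕ) : Ty → Ty
    | .unit U => .unit (UTy.replAux X V c U)
    | .add T R => .add (Ty.replAux X V c T) (Ty.replAux X V c R)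
    | .zero => .zero
end

/-- Capture-avoiding substitution `U[V/X]` of a free type variable. -/
def UTy.repl (X : ℕ) (V : UTy) (U : UTy) : UTy := UTy.replAux X V 0 U

/-- Capture-avoiding substitution `T[V/X]` of a free type variable. -/
def Ty.repl (X : ℕ) (V : UTy) (T : Ty) : Ty := Ty.replAux X V 0 T

mutual
  /-- Abstraction of the free type variable `X` (at depth `c`), used to form `∀X.U`. -/
  def UTy.absAux (X c : ℕ) : UTy → UTy
    | .var n => if n = X + c then .var c else if c ≤ n then .var (n + 1) else .var n
    | .arrow U T => .arrow (UTy.absAux X c U) (Ty.absAux X c T)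
    | .all U => .all (UTy.absAux X (c + 1) U)

  /-- Abstraction of the free type variable `X` (at depth `c`) in a type. -/
  def Ty.absAux (X c : ℕ) : Ty → Ty
    | .unit U => .unit (UTy.absAux X c U)
    | .add T R => .add (Ty.absAux X c T) (Ty.absAux X c R)
    | .zero => .zero
end

/-- `∀X.U`: universal quantification of the free type variable `X` in `U`. -/
def UTy.genAll (X : ℕ) (U : UTy) : UTy := .all (UTy.absAux X 0 U)

mutual
  /-- `X` occurs free in a unit type. -/
  def UTy.Free (n : ℕ) : UTy → Prop
    | .var m => m = n
    | .arrow U T => UTy.Free n U ∨ Ty.Free n T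
    | .all U => UTy.Free (n + 1) U

  /-- `X` occurs free in a type. -/
  def Ty.Free (n : ℕ) : Ty → Prop
    | .unit U => UTy.Free n U
    | .add T R => Ty.Free n T ∨ Ty.Free n R
    | .zero => False
end

mutual
  /-- Equivalence of unit types (the least congruence making `+` on types
  associative, commutative, with neutral element `𝟘`). -/
  inductive UEq : UTy → UTy → Prop
    | refl (U : UTy) : UEq U U
    | symm : UEq U V → UEq V U
    | trans : UEq U V → UEq V W → UEq U W
    | arrow : UEq U U' → TEq T T' → UEq (.arrow U T) (.arrow U' T')
    | all : UEq U U' → UEq (.all U) (.all U')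

  /-- Equivalence of types: the least congruence such that
  `T+R ≡ R+T`, `T+(R+S) ≡ (T+R)+S` and `T+𝟘 ≡ T`. -/
  inductive TEq : Ty → Ty → Prop
    | refl (T : Ty) : TEq T T
    | symm : TEq T R → TEq R T
    | trans : TEq T R → TEq R S → TEq T S
    | unit : UEq U U' → TEq (.unit U) (.unit U')
    | addCongr : TEq T T' → TEq R R' → TEq (.add T R) (.add T' R')
    | comm (T R : Ty) : TEq (.add T R) (.add R T)
    | assoc (T R S : Ty) : TEq (.add T (.add R S)) (.add (.add T R) S)
    | zero (T : Ty) : TEq (.add T .zero) T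
end

/-- `Σ_{i} T_i`, with the empty sum being `𝟘`. -/
def sumT (Ts : List Ty) : Ty := Ts.foldl Ty.add Ty.zero

/-- `∀X₁.…∀X_k.U`. -/
def allN : ℕ → UTy → UTy
  | 0, U => U
  | k + 1, U => .all (allN k U)

/-- Lifting of type variables in a typing context (for ∀-introduction). -/
def liftCtx (Γ : List UTy) : List UTy := Γ.map (UTy.shift 1 0)

/-! ## The Add type system -/

/-- Typing judgements of the Add type system. -/
inductive Typing : List UTy → Tm → Ty → Prop
  | ax {Γ : List UTy} {n : ℕ} {U : UTy} : Γ[n]? = some U → Typing Γ (.var n) (.unit U)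
  | axZero {Γ : List UTy} : Typing Γ .zero .zero
  | equiv {Γ t T R} : Typing Γ t T → TEq T R → Typing Γ t R
  | arrI {Γ U t T} : Typing (U :: Γ) t T → Typing Γ (.lam t) (.unit (.arrow U T))
  | arrE {Γ t u} {k : ℕ} {U : UTy} {Ts : List Ty} {Vs : List (List UTy)} :
      Ts ≠ [] → Vs ≠ [] → (∀ V ∈ Vs, V.length = k) →
      Typing Γ t (sumT (Ts.map fun Ti => .unit (allN k (.arrow U Ti)))) →
      Typing Γ u (sumT (Vs.map fun Vj => .unit (UTy.msubst Vj U))) →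
      Typing Γ (.app t u)
        (sumT ((Ts.map fun Ti => Vs.map fun Vj => Ty.msubst Vj Ti).flatten))
  | addI {Γ t u T R} : Typing Γ t T → Typing Γ u R → Typing Γ (.add t u) (.add T R)
  | allE {Γ t U} (V : UTy) : Typing Γ t (.unit (.all U)) → Typing Γ t (.unit (UTy.subst 0 V U))
  | allI {Γ t U} : Typing (liftCtx Γ) t (.unit U) → Typing Γ t (.unit (.all U))

/-! ## Interpretation of types by reducibility candidates -/

/-- Extension of a valuation. -/
def consV (A : Set Tm) (ρ : ℕ → Set Tm) : ℕ → Set Tm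
  | 0 => A
  | n + 1 => ρ n

mutual
  /-- Interpretation of unit types. -/
  def interpU : UTy → (ℕ → Set Tm) → Set Tm
    | .var n, ρ => ρ n
    | .arrow U T, ρ => CArrow (interpU U ρ) (interpT T ρ)
    | .all U, ρ => {t | ∀ A : Set Tm, IsCandidate A → t ∈ interpU U (consV A ρ)}

  /-- Interpretation of types. -/
  def interpT : Ty → (ℕ → Set Tm) → Set Tm
    | .unit U, ρ => interpU U ρ
    | .add T R, ρ => CPlus (interpT T ρ) (interpT R ρ)
    | .zero, _ => clo ∅
end

/-- Lifting of a simultaneous substitution under a binder. -/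
def liftSub (σ : ℕ → Tm) : ℕ → Tm
  | 0 => .var 0
  | n + 1 => Tm.shift 1 0 (σ n)

/-- Simultaneous substitution `t_σ` of all free term variables of `t`. -/
def Tm.msubst (σ : ℕ → Tm) : Tm → Tm
  | .var n => σ n
  | .lam t => .lam (Tm.msubst (liftSub σ) t)
  | .app t u => .app (Tm.msubst σ t) (Tm.msubst σ u)
  | .add t u => .add (Tm.msubst σ t) (Tm.msubst σ u)
  | .zero => .zero

/-! ## The relations ⋖ and ≼ on types -/

/-- The relation `⋖` on unit types: `U₁ ⋖ U₂` iff either `U₂ ≡ ∀X.U₁`, or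
`U₁ ≡ ∀X.U'` and `U₂ ≡ U'[V/X]`. -/
inductive SSub : UTy → UTy → Prop
  | gen {U₁ U₂ : UTy} (X : ℕ) : UEq U₂ (UTy.genAll X U₁) → SSub U₁ U₂
  | inst {U₁ U₂ : UTy} (U' V : UTy) : UEq U₁ (.all U') → UEq U₂ (UTy.subst 0 V U') →
      SSub U₁ U₂

/-- The relation `≼`: the reflexive (with respect to `≡`) and transitive
closure of `⋖`, on types. -/
inductive TPre : Ty → Ty → Prop
  | ofEq : TEq T T' → TPre T T'
  | ofSSub {U V : UTy} : SSub U V → TPre (.unit U) (.unit V)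
  | trans : TPre T T' → TPre T' T'' → TPre T T''

/-! ## Trees and the structured type system Add_struct -/

/-- Binary trees with two kinds of leaves: `ℓ`-leaves and `𝟘`-leaves. -/
inductive ATree : Type
  | leaf : ATree
  | zleaf : ATree
  | node : ATree → ATree → ATree
  deriving DecidableEq

namespace ATree

/-- ATree composition: branch a copy of `A'` at each `ℓ`-leaf of `A`. -/
def comp : ATree → ATree → ATree
  | .leaf, A' => A'
  | .zleaf, _ => .zleaf
  | .node A B, A' => .node (comp A A') (comp B A')

/-- `LeafAt A w`: the word `w` (over `{l,r}`, here `{false,true}`) is the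
address of an `ℓ`-leaf of `A`. -/
inductive LeafAt : ATree → List Bool → Prop
  | leaf : LeafAt .leaf []
  | left {A B w} : LeafAt A w → LeafAt (.node A B) (false :: w)
  | right {A B w} : LeafAt B w → LeafAt (.node A B) (true :: w)

/-- Labelling of the `ℓ`-leaves of a tree by unit types, yielding a type. -/
def labelU : ATree → (List Bool → UTy) → Ty
  | .leaf, f => .unit (f [])
  | .zleaf, _ => .zero
  | .node A B, f => .add (labelU A fun w => f (false :: w)) (labelU B fun w => f (true :: w))

/-- Labelling of the `ℓ`-leaves of a tree by types, yielding a type. -/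
def labelT : ATree → (List Bool → Ty) → Ty
  | .leaf, f => f []
  | .zleaf, _ => .zero
  | .node A B, f => .add (labelT A fun w => f (false :: w)) (labelT B fun w => f (true :: w))

/-- Split an address of a leaf of `A ∘ A'` into the `A`-part and the `A'`-part. -/
def split : ATree → List Bool → List Bool × List Bool
  | .leaf, p => ([], p)
  | .zleaf, p => ([], p)
  | .node A _, false :: p => ((split A p).1.cons false, (split A p).2)
  | .node _ B, true :: p => ((split B p).1.cons true, (split B p).2)
  | .node _ _, [] => ([], [])

end ATree

/-- Typing derivations of the structured type system Add_struct. -/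
inductive SDeriv : List UTy → Tm → Ty → Type
  | ax (Γ : List UTy) (n : ℕ) (U : UTy) (h : Γ[n]? = some U) : SDeriv Γ (.var n) (.unit U)
  | axZero (Γ : List UTy) : SDeriv Γ .zero .zero
  | arrI {Γ U t T} (D : SDeriv (U :: Γ) t T) : SDeriv Γ (.lam t) (.unit (.arrow U T))
  | addI {Γ t u T R} (D₁ : SDeriv Γ t T) (D₂ : SDeriv Γ u R) :
      SDeriv Γ (.add t u) (.add T R)
  | allE {Γ t U} (V : UTy) (D : SDeriv Γ t (.unit (.all U))) :
      SDeriv Γ t (.unit (UTy.subst 0 V U))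
  | allI {Γ t U} (D : SDeriv (liftCtx Γ) t (.unit U)) : SDeriv Γ t (.unit (.all U))
  | arrE {Γ t u} (A A' : ATree) (k : ℕ) (U : UTy) (Tf : List Bool → Ty)
      (Vf : List Bool → List UTy)
      (hlen : ∀ v, A'.LeafAt v → (Vf v).length = k)
      (D₁ : SDeriv Γ t (A.labelU fun w => allN k (.arrow U (Tf w))))
      (D₂ : SDeriv Γ u (A'.labelU fun v => UTy.msubst (Vf v) U)) :
      SDeriv Γ (.app t u)
        ((A.comp A').labelT fun p => Ty.msubst (Vf (A.split p).2) (Tf (A.split p).1))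

/-! ## System F with pairs -/

/-- Terms of System F with pairs. -/
inductive FTm : Type
  | var : ℕ → FTm
  | lam : FTm → FTm
  | app : FTm → FTm → FTm
  | star : FTm
  | pair : FTm → FTm → FTm
  | pl : FTm → FTm
  | pr : FTm → FTm
  deriving DecidableEq

/-- Types of System F with pairs. -/
inductive FTy : Type
  | var : ℕ → FTy
  | arrow : FTy → FTy → FTy
  | all : FTy → FTy
  | one : FTy
  | prod : FTy → FTy → FTy
  deriving DecidableEq

/-- Shifting of term variables in F-terms. -/
def FTm.shift (d c : ℕ) : FTm → FTm
  | .var n => if n < c then .var n else .var (n + d)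
  | .lam t => .lam (FTm.shift d (c + 1) t)
  | .app t u => .app (FTm.shift d c t) (FTm.shift d c u)
  | .star => .star
  | .pair t u => .pair (FTm.shift d c t) (FTm.shift d c u)
  | .pl t => .pl (FTm.shift d c t)
  | .pr t => .pr (FTm.shift d c t)

/-- Substitution of the term variable `k` by `v` in an F-term. -/
def FTm.subst (k : ℕ) (v : FTm) : FTm → FTm
  | .var n => if n = k then FTm.shift k 0 v else if k < n then .var (n - 1) else .var n
  | .lam t => .lam (FTm.subst (k + 1) v t)
  | .app t u => .app (FTm.subst k v t) (FTm.subst k v u)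
  | .star => .star
  | .pair t u => .pair (FTm.subst k v t) (FTm.subst k v u)
  | .pl t => .pl (FTm.subst k v t)
  | .pr t => .pr (FTm.subst k v t)

/-- Shifting of type variables in F-types. -/
def FTy.shift (d c : ℕ) : FTy → FTy
  | .var n => if n < c then .var n else .var (n + d)
  | .arrow A B => .arrow (FTy.shift d c A) (FTy.shift d c B)
  | .all A => .all (FTy.shift d (c + 1) A)
  | .one => .one
  | .prod A B => .prod (FTy.shift d c A) (FTy.shift d c B)

/-- Substitution of the type variable `k` by `B` in an F-type. -/
def FTy.subst (k : ℕ) (B : FTy) : FTy → FTy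
  | .var n => if n = k then FTy.shift k 0 B else if k < n then .var (n - 1) else .var n
  | .arrow A A' => .arrow (FTy.subst k B A) (FTy.subst k B A')
  | .all A => .all (FTy.subst (k + 1) B A)
  | .one => .one
  | .prod A A' => .prod (FTy.subst k B A) (FTy.subst k B A')

/-- One-step reduction in System F with pairs. -/
inductive FStep : FTm → FTm → Prop
  | beta (t u : FTm) : FStep (.app (.lam t) u) (FTm.subst 0 u t)
  | plPair (t u : FTm) : FStep (.pl (.pair t u)) t
  | prPair (t u : FTm) : FStep (.pr (.pair t u)) u
  | eta (t : FTm) : FStep (.lam (.app (FTm.shift 1 0 t) (.var 0))) t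
  | sp (p : FTm) : FStep (.pair (.pl p) (.pr p)) p
  | lamCongr : FStep t t' → FStep (.lam t) (.lam t')
  | appLeft : FStep t t' → FStep (.app t u) (.app t' u)
  | appRight : FStep u u' → FStep (.app t u) (.app t u')
  | pairLeft : FStep t t' → FStep (.pair t u) (.pair t' u)
  | pairRight : FStep u u' → FStep (.pair t u) (.pair t u')
  | plCongr : FStep t t' → FStep (.pl t) (.pl t')
  | prCongr : FStep t t' → FStep (.pr t) (.pr t')

/-- Typing in System F with pairs. -/
inductive FTyping : List FTy → FTm → FTy → Prop
  | ax {Γ n A} : Γ[n]? = some A → FTyping Γ (.var n) A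
  | star {Γ} : FTyping Γ .star .one
  | lam {Γ A t B} : FTyping (A :: Γ) t B → FTyping Γ (.lam t) (.arrow A B)
  | app {Γ t u A B} : FTyping Γ t (.arrow A B) → FTyping Γ u A → FTyping Γ (.app t u) B
  | pair {Γ t u A B} : FTyping Γ t A → FTyping Γ u B → FTyping Γ (.pair t u) (.prod A B)
  | pl {Γ t A B} : FTyping Γ t (.prod A B) → FTyping Γ (.pl t) A
  | pr {Γ t A B} : FTyping Γ t (.prod A B) → FTyping Γ (.pr t) B
  | allI {Γ t A} : FTyping (Γ.map (FTy.shift 1 0)) t A → FTyping Γ t (.all A)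
  | allE {Γ t A} (B : FTy) : FTyping Γ t (.all A) → FTyping Γ t (FTy.subst 0 B A)

/-! ## The translation from Add_struct into System F with pairs -/

mutual
  /-- Translation of unit types into F-types. -/
  def transU : UTy → FTy
    | .var n => .var n
    | .arrow U T => .arrow (transU U) (transT T)
    | .all U => .all (transU U)

  /-- Translation of Add types into F-types. -/
  def transT : Ty → FTy
    | .unit U => transU U
    | .add T R => .prod (transT T) (transT R)
    | .zero => .one
end

/-- Labelling of the `ℓ`-leaves of a tree by F-terms (pairs at the nodes, `⋆`
at the `𝟘`-leaves), yielding an F-term. -/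
def ATree.labelF : ATree → (List Bool → FTm) → FTm
  | .leaf, f => f []
  | .zleaf, _ => .star
  | .node A B, f => .pair (ATree.labelF A fun w => f (false :: w))
      (ATree.labelF B fun w => f (true :: w))

/-- `π_{w̄}(t)`: the composite of projections along the mirror of the word `w`. -/
def projMirror (w : List Bool) (t : FTm) : FTm :=
  w.foldl (fun s b => if b then .pr s else .pl s) t

/-- The translation `|t|_D` of a term typed in Add_struct by a derivation `D`
into an F-term. -/
def transD : ∀ {Γ : List UTy} {t : Tm} {T : Ty}, SDeriv Γ t T → FTm
  | _, _, _, .ax _ n _ _ => .var n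
  | _, _, _, .axZero _ => .star
  | _, _, _, .arrI D => .lam (transD D)
  | _, _, _, .addI D₁ D₂ => .pair (transD D₁) (transD D₂)
  | _, _, _, .allE _ D => transD D
  | _, _, _, .allI D => transD D
  | _, _, _, .arrE A A' _ _ _ _ _ D₁ D₂ =>
      (A.comp A').labelF fun p =>
        .app (projMirror (A.split p).1 (transD D₁)) (projMirror (A.split p).2 (transD D₂))

/-! ## Structural reduction (without AC and without the rule `t+𝟎 → t`) -/

/-- One-step reduction by a rule other than `t+𝟎 → t` (and not using the
AC-equivalence, which is absent from Add_struct). -/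
inductive SStep : Tm → Tm → Prop
  | distrRight (t u s : Tm) : SStep (.app (.add t u) s) (.add (.app t s) (.app u s))
  | distrLeft (t u s : Tm) : SStep (.app t (.add u s)) (.add (.app t u) (.app t s))
  | zeroApp (t : Tm) : SStep (.app .zero t) .zero
  | appZero (t : Tm) : SStep (.app t .zero) .zero
  | beta (t v : Tm) : IsValue v → SStep (.app (.lam t) v) (Tm.subst 0 v t)
  | appLeft : SStep t t' → SStep (.app t u) (.app t' u)
  | appRight : SStep u u' → SStep (.app t u) (.app t u')
  | addLeft : SStep t t' → SStep (.add t u) (.add t' u)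
  | addRight : SStep u u' → SStep (.add t u) (.add t u')
  | lamCongr : SStep t t' → SStep (.lam t) (.lam t')

/-! ## The partial inverse translation -/

/-- Partial inverse translation on types. -/
def invTy : FTy → Option Ty
  | .var n => some (.unit (.var n))
  | .one => some .zero
  | .all A =>
    match invTy A with
    | some (.unit U) => some (.unit (.all U))
    | _ => none
  | .prod A B =>
    match invTy A, invTy B with
    | some T, some R => some (.add T R)
    | _, _ => none
  | .arrow A B =>
    match invTy A, invTy B with
    | some (.unit U), some T => some (.unit (.arrow U T))
    | _, _ => none

/-- An F-term of the shape `A[wv ↦ π_{w̄}(t) π_{v̄}(u)]` for a non-trivial tree. -/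
def IsTreeApp (s : FTm) : Prop :=
  ∃ (A A' : ATree) (t u : FTm), A.comp A' ≠ .leaf ∧ A.comp A' ≠ .zleaf ∧
    s = (A.comp A').labelF fun p =>
      .app (projMirror (A.split p).1 t) (projMirror (A.split p).2 u)

/-- The partial inverse translation on F-terms, as a relation. -/
inductive InvTm : FTm → Tm → Prop
  | var (n : ℕ) : InvTm (.var n) (.var n)
  | star : InvTm .star .zero
  | lam : InvTm t t' → InvTm (.lam t) (.lam t')
  | app : InvTm t t' → InvTm u u' → InvTm (.app t u) (.app t' u')
  | treeApp (A A' : ATree) {t u : FTm} {t' u' : Tm} :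
      A.comp A' ≠ .leaf → A.comp A' ≠ .zleaf → InvTm t t' → InvTm u u' →
      InvTm ((A.comp A').labelF fun p =>
          .app (projMirror (A.split p).1 t) (projMirror (A.split p).2 u))
        (.app t' u')
  | pair : ¬ IsTreeApp (.pair t u) → InvTm t t' → InvTm u u' →
      InvTm (.pair t u) (.add t' u')


/-! ## Auxiliary de Bruijn lemmas -/

namespace GenLam

mutual
theorem ushift_zero : ∀ (A : UTy) (c : ℕ), UTy.shift 0 c A = A
  | .var n, c => by simp [UTy.shift]
  | .arrow U T, c => by simp [UTy.shift, ushift_zero U, tshift_zero T]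
  | .all U, c => by simp [UTy.shift, ushift_zero U]
theorem tshift_zero : ∀ (A : Ty) (c : ℕ), Ty.shift 0 c A = A
  | .unit U, c => by simp [Ty.shift, ushift_zero U]
  | .add T R, c => by simp [Ty.shift, tshift_zero T, tshift_zero R]
  | .zero, _ => by simp [Ty.shift]
end

mutual
theorem ushift_shift : ∀ (A : UTy) (j d c c' : ℕ), c' ≤ c → c ≤ c' + d →
    UTy.shift j c (UTy.shift d c' A) = UTy.shift (j + d) c' A
  | .var n, j, d, c, c', h1, h2 => by
      simp only [UTy.shift]
      split
      · simp [UTy.shift]; omega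
      · have : ¬ (n + d < c) := by omega
        simp [UTy.shift, this]; omega
  | .arrow U T, j, d, c, c', h1, h2 => by
      simp [UTy.shift, ushift_shift U j d c c' h1 h2, tshift_shift T j d c c' h1 h2]
  | .all U, j, d, c, c', h1, h2 => by
      simp [UTy.shift, ushift_shift U j d (c+1) (c'+1) (by omega) (by omega)]
theorem tshift_shift : ∀ (A : Ty) (j d c c' : ℕ), c' ≤ c → c ≤ c' + d →
    Ty.shift j c (Ty.shift d c' A) = Ty.shift (j + d) c' A
  | .unit U, j, d, c, c', h1, h2 => by simp [Ty.shift, ushift_shift U j d c c' h1 h2]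
  | .add T R, j, d, c, c', h1, h2 => by
      simp [Ty.shift, tshift_shift T j d c c' h1 h2, tshift_shift R j d c c' h1 h2]
  | .zero, _, _, _, _, _, _ => by simp [Ty.shift]
end

mutual
theorem usubst_shift {V : UTy} : ∀ (A : UTy) (c k j : ℕ),
    UTy.subst (j + (k + c)) V (UTy.shift j c A) = UTy.shift j c (UTy.subst (k + c) V A)
  | .var n, c, k, j => by
      simp only [UTy.shift, UTy.subst]
      rcases Nat.lt_trichotomy n (k + c) with h | h | h
      · rcases Nat.lt_or_ge n c with h' | h'
        · simp only [if_pos h']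
          have e1 : ¬ (n = j + (k + c)) := by omega
          have e2 : ¬ (j + (k + c) < n) := by omega
          have e3 : ¬ (n = k + c) := by omega
          have e4 : ¬ (k + c < n) := by omega
          simp [UTy.subst, UTy.shift, e1, e2, e3, e4, h']
        · simp only [if_neg (by omega : ¬ n < c)]
          have e1 : ¬ (n + j = j + (k + c)) := by omega
          have e2 : ¬ (j + (k + c) < n + j) := by omega
          have e3 : ¬ (n = k + c) := by omega
          have e4 : ¬ (k + c < n) := by omega
          simp [UTy.subst, UTy.shift, e1, e2, e3, e4, show ¬ n < c by omega]
      · subst h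
        have hc : ¬ (k + c < c) := by omega
        have e1 : k + c + j = j + (k + c) := by omega
        simp only [if_neg hc, if_pos rfl, UTy.subst, if_pos e1]
        exact (ushift_shift V j (k + c) c 0 (by omega) (by omega)).symm
      · simp only [if_neg (by omega : ¬ n < c)]
        have e1 : ¬ (n + j = j + (k + c)) := by omega
        have e2 : j + (k + c) < n + j := by omega
        have e3 : ¬ (n = k + c) := by omega
        have e4 : k + c < n := by omega
        simp only [UTy.subst, if_neg e1, if_pos e2, if_neg e3, if_pos e4, UTy.shift,
          if_neg (by omega : ¬ n - 1 < c)]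
        congr 1; omega
  | .arrow U T, c, k, j => by
      simp [UTy.shift, UTy.subst, usubst_shift U c k j, tsubst_shift T c k j]
  | .all U, c, k, j => by
      have := usubst_shift (V := V) U (c+1) k j
      simp only [UTy.shift, UTy.subst]
      rw [show j + (k + c) + 1 = j + (k + (c+1)) by omega, show k + c + 1 = k + (c+1) by omega, this]
theorem tsubst_shift {V : UTy} : ∀ (A : Ty) (c k j : ℕ),
    Ty.subst (j + (k + c)) V (Ty.shift j c A) = Ty.shift j c (Ty.subst (k + c) V A)
  | .unit U, c, k, j => by simp [Ty.shift, Ty.subst, usubst_shift U c k j]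
  | .add T R, c, k, j => by
      simp [Ty.shift, Ty.subst, tsubst_shift T c k j, tsubst_shift R c k j]
  | .zero, _, _, _ => by simp [Ty.shift, Ty.subst]
end

mutual
theorem usubst_shift_cancel {X : UTy} : ∀ (A : UTy) (e c j : ℕ), c ≤ j → j ≤ c + e →
    UTy.subst j X (UTy.shift (e + 1) c A) = UTy.shift e c A
  | .var n, e, c, j, h1, h2 => by
      rcases Nat.lt_or_ge n c with h | h
      · have e1 : ¬ n = j := by omega
        have e2 : ¬ j < n := by omega
        simp [UTy.shift, UTy.subst, h, e1, e2]
      · have e0 : ¬ n < c := by omega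
        have e1 : ¬ (n + (e + 1) = j) := by omega
        have e2 : j < n + (e + 1) := by omega
        simp only [UTy.shift, if_neg e0, UTy.subst, if_neg e1, if_pos e2]
        all_goals (congr 1 <;> omega)
  | .arrow U T, e, c, j, h1, h2 => by
      simp [UTy.shift, UTy.subst, usubst_shift_cancel U e c j h1 h2,
        tsubst_shift_cancel T e c j h1 h2]
  | .all U, e, c, j, h1, h2 => by
      simp [UTy.shift, UTy.subst, usubst_shift_cancel U e (c+1) (j+1) (by omega) (by omega)]
theorem tsubst_shift_cancel {X : UTy} : ∀ (A : Ty) (e c j : ℕ), c ≤ j → j ≤ c + e →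
    Ty.subst j X (Ty.shift (e + 1) c A) = Ty.shift e c A
  | .unit U, e, c, j, h1, h2 => by
      simp [Ty.shift, Ty.subst, usubst_shift_cancel U e c j h1 h2]
  | .add T R, e, c, j, h1, h2 => by
      simp [Ty.shift, Ty.subst, tsubst_shift_cancel T e c j h1 h2,
        tsubst_shift_cancel R e c j h1 h2]
  | .zero, _, _, _, _, _ => by simp [Ty.shift, Ty.subst]
end

mutual
theorem usubst_subst {V W : UTy} : ∀ (A : UTy) (j k : ℕ),
    UTy.subst (k + j) V (UTy.subst j W A)
      = UTy.subst j (UTy.subst k V W) (UTy.subst (k + j + 1) V A)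
  | .var n, j, k => by
      rcases Nat.lt_trichotomy n j with h | h | h
      · have e1 : ¬ (n = j) := by omega
        have e2 : ¬ (j < n) := by omega
        have e3 : ¬ (n = k + j) := by omega
        have e4 : ¬ (k + j < n) := by omega
        have e5 : ¬ (n = k + j + 1) := by omega
        have e6 : ¬ (k + j + 1 < n) := by omega
        simp [UTy.subst, e1, e2, e3, e4, e5, e6]
      · subst h
        have e5 : ¬ (n = k + n + 1) := by omega
        have e6 : ¬ (k + n + 1 < n) := by omega
        simp only [UTy.subst, if_pos rfl, if_neg e5, if_neg e6]
        have h := usubst_shift (V := V) W 0 k n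
        rw [Nat.add_zero] at h
        rw [Nat.add_comm k n]
        exact h
      · have e1 : ¬ (n = j) := by omega
        simp only [UTy.subst, if_neg e1, if_pos h]
        rcases Nat.lt_trichotomy n (k + j + 1) with h' | h' | h'
        · have e3 : ¬ (n - 1 = k + j) := by omega
          have e4 : ¬ (k + j < n - 1) := by omega
          have e5 : ¬ (n = k + j + 1) := by omega
          have e6 : ¬ (k + j + 1 < n) := by omega
          have e7 : ¬ (n = j) := by omega
          simp [UTy.subst, e3, e4, e5, e6, e7, h]
        · subst h'
          have e3 : k + j + 1 - 1 = k + j := by omega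
          simp only [UTy.subst, e3, if_pos rfl, if_neg (by omega : ¬ (k + j + 1 < k + j + 1))]
          exact (usubst_shift_cancel (X := UTy.subst k V W) V (k+j) 0 j (by omega) (by omega)).symm
        · have e3 : ¬ (n - 1 = k + j) := by omega
          have e4 : k + j < n - 1 := by omega
          have e5 : ¬ (n = k + j + 1) := by omega
          have e7 : ¬ (n - 1 = j) := by omega
          have e8 : j < n - 1 := by omega
          simp [UTy.subst, e3, e4, e5, h', e7, e8]
  | .arrow U T, j, k => by
      simp [UTy.subst, usubst_subst U j k, tsubst_subst T j k]
  | .all U, j, k => by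
      have := usubst_subst (V := V) (W := W) U (j+1) k
      simp only [UTy.subst]
      rw [show k + j + 1 = k + (j + 1) by omega, this]
theorem tsubst_subst {V W : UTy} : ∀ (A : Ty) (j k : ℕ),
    Ty.subst (k + j) V (Ty.subst j W A)
      = Ty.subst j (UTy.subst k V W) (Ty.subst (k + j + 1) V A)
  | .unit U, j, k => by simp [Ty.subst, usubst_subst U j k]
  | .add T R, j, k => by simp [Ty.subst, tsubst_subst T j k, tsubst_subst R j k]
  | .zero, _, _ => by simp [Ty.subst]
end


/-- The renamed abstracted variable after substituting the fresh variable `y` for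
variable `k`. -/
def renX (k y X : ℕ) : ℕ := if X = k then y + k else if k < X then X - 1 else X

mutual
theorem uabs_subst {y X : ℕ} (hXy : X < y) : ∀ (A : UTy) (c k : ℕ),
    ¬ UTy.Free (y + k + c + 1) A →
    UTy.subst (k + 1 + c) (.var y) (UTy.absAux X c A)
      = UTy.absAux (renX k y X) c (UTy.subst (k + c) (.var y) A)
  | .var n, c, k, hf => by
      have hf' : n ≠ y + k + c + 1 := by
        intro h; exact hf (by simpa [UTy.Free] using h)
      unfold renX
      rcases Nat.lt_trichotomy X k with hX | hX | hX
      · -- X < k, renX = X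
        simp only [if_neg (by omega : ¬ X = k), if_neg (by omega : ¬ k < X)]
        by_cases h1 : n = X + c
        · subst h1
          simp [UTy.absAux, UTy.subst, UTy.shift,
            show ¬ (X + c = k + c) by omega, show ¬ (k + c < X + c) by omega,
            show X + c < k + 1 + c by omega, show ¬ (X + c = k + 1 + c) by omega,
            show ¬ (k + 1 + c < c) by omega, show ¬ X = k by omega]
        · rcases Nat.lt_or_ge n c with h2 | h2
          · simp [UTy.absAux, UTy.subst, h1, show ¬ c ≤ n by omega,
              show ¬ n = k + 1 + c by omega, show ¬ (k + 1 + c) < n by omega,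
              show ¬ n = k + c by omega, show ¬ (k + c) < n by omega]
          · rcases Nat.lt_trichotomy n (k + c) with h3 | h3 | h3
            · simp [UTy.absAux, UTy.subst, h1, h2, show ¬ n + 1 = k + 1 + c by omega,
                show ¬ (k + 1 + c) < n + 1 by omega, show ¬ n = k + c by omega,
                show ¬ (k + c) < n by omega]
            · subst h3
              have : UTy.shift (k + 1 + c) 0 (UTy.var y) = UTy.var (y + (k + 1 + c)) := by
                simp [UTy.shift]
              simp [UTy.absAux, UTy.subst, UTy.shift, h1, h2,
                show k + c + 1 = k + 1 + c by omega,
                show ¬ (y + (k + c) = X + c) by omega,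
                show c ≤ y + (k + c) by omega, show y + (k+c) + 1 = y + (k+1+c) by omega, show ¬ k = X by omega]
            · simp [UTy.absAux, UTy.subst, h1, h2, show ¬ n + 1 = k + 1 + c by omega,
                show (k + 1 + c) < n + 1 by omega, show ¬ n = k + c by omega,
                show (k + c) < n by omega, show ¬ n - 1 = X + c by omega,
                show c ≤ n - 1 by omega, show n - 1 + 1 = n by omega]
      · -- X = k, renX = y + k
        subst hX
        simp only [if_pos rfl]
        by_cases h1 : n = X + c
        · subst h1
          simp [UTy.absAux, UTy.subst, UTy.shift, show X + c < X + 1 + c by omega,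
            show ¬ (X + c = X + 1 + c) by omega, show y + (X + c) = y + X + c by omega,
            show ¬ (X + 1 + c < c) by omega]
        · rcases Nat.lt_or_ge n c with h2 | h2
          · simp [UTy.absAux, UTy.subst, h1, show ¬ c ≤ n by omega,
              show ¬ n = X + 1 + c by omega, show ¬ (X + 1 + c) < n by omega,
              show ¬ n = X + c by omega, show ¬ (X + c) < n by omega,
              show ¬ n = y + X + c by omega]
          · rcases Nat.lt_trichotomy n (X + c) with h3 | h3 | h3
            · simp [UTy.absAux, UTy.subst, h1, h2, show ¬ n + 1 = X + 1 + c by omega,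
                show ¬ (X + 1 + c) < n + 1 by omega, show ¬ (X + c) < n by omega,
                show ¬ n = y + X + c by omega]
            · omega
            · simp [UTy.absAux, UTy.subst, h1, h2, show ¬ n + 1 = X + 1 + c by omega,
                show (X + 1 + c) < n + 1 by omega, show (X + c) < n by omega,
                show ¬ n - 1 = y + X + c by omega, show c ≤ n - 1 by omega,
                show n - 1 + 1 = n by omega]
      · -- k < X, renX = X - 1
        simp only [if_neg (by omega : ¬ X = k), if_pos hX]
        by_cases h1 : n = X + c
        · subst h1
          simp [UTy.absAux, UTy.subst, UTy.shift,
            show ¬ (X + c = k + c) by omega, show (k + c) < X + c by omega,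
            show ¬ (c < k + 1 + c) → False by omega, show c < k + 1 + c by omega,
            show X + c - 1 = X - 1 + c by omega, show ¬ X = k by omega]
        · rcases Nat.lt_or_ge n c with h2 | h2
          · simp [UTy.absAux, UTy.subst, h1, show ¬ c ≤ n by omega,
              show ¬ n = k + 1 + c by omega, show ¬ (k + 1 + c) < n by omega,
              show ¬ n = k + c by omega, show ¬ (k + c) < n by omega,
              show ¬ n = X - 1 + c by omega]
          · rcases Nat.lt_trichotomy n (k + c) with h3 | h3 | h3
            · simp [UTy.absAux, UTy.subst, h1, h2, show ¬ n + 1 = k + 1 + c by omega,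
                show ¬ (k + 1 + c) < n + 1 by omega, show ¬ n = k + c by omega,
                show ¬ (k + c) < n by omega, show ¬ n = X - 1 + c by omega]
            · subst h3
              simp [UTy.absAux, UTy.subst, UTy.shift, h1, h2,
                show k + c + 1 = k + 1 + c by omega,
                show ¬ (y + (k + c) = X - 1 + c) by omega,
                show c ≤ y + (k + c) by omega, show y + (k+c) + 1 = y + (k+1+c) by omega, show ¬ k = X by omega]
            · simp [UTy.absAux, UTy.subst, h1, h2, show ¬ n + 1 = k + 1 + c by omega,
                show (k + 1 + c) < n + 1 by omega, show ¬ n = k + c by omega,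
                show (k + c) < n by omega, show ¬ n - 1 = X - 1 + c by omega,
                show c ≤ n - 1 by omega, show n - 1 + 1 = n by omega]
  | .arrow U T, c, k, hf => by
      have hU : ¬ UTy.Free (y + k + c + 1) U := fun h => hf (Or.inl h)
      have hT : ¬ Ty.Free (y + k + c + 1) T := fun h => hf (Or.inr h)
      simp [UTy.absAux, UTy.subst, uabs_subst hXy U c k hU, tabs_subst hXy T c k hT]
  | .all U, c, k, hf => by
      have hU : ¬ UTy.Free (y + k + (c + 1) + 1) U := by
        intro h; exact hf (show UTy.Free (y + k + c + 1) (.all U) from by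
          simpa [UTy.Free, show y + k + c + 1 + 1 = y + k + (c+1) + 1 by omega] using h)
      have := uabs_subst (y := y) (X := X) hXy U (c + 1) k hU
      simp only [UTy.absAux, UTy.subst]
      rw [show k + 1 + c + 1 = k + 1 + (c + 1) by omega,
        show k + c + 1 = k + (c + 1) by omega, this]
theorem tabs_subst {y X : ℕ} (hXy : X < y) : ∀ (A : Ty) (c k : ℕ),
    ¬ Ty.Free (y + k + c + 1) A →
    Ty.subst (k + 1 + c) (.var y) (Ty.absAux X c A)
      = Ty.absAux (renX k y X) c (Ty.subst (k + c) (.var y) A)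
  | .unit U, c, k, hf => by
      simp [Ty.absAux, Ty.subst, uabs_subst hXy U c k (fun h => hf h)]
  | .add T R, c, k, hf => by
      have hT : ¬ Ty.Free (y + k + c + 1) T := fun h => hf (Or.inl h)
      have hR : ¬ Ty.Free (y + k + c + 1) R := fun h => hf (Or.inr h)
      simp [Ty.absAux, Ty.subst, tabs_subst hXy T c k hT, tabs_subst hXy R c k hR]
  | .zero, _, _, _ => by simp [Ty.absAux, Ty.subst]
end

mutual
theorem uabs_subst_cancel {y : ℕ} : ∀ (A : UTy) (c : ℕ), ¬ UTy.Free (y + c + 1) A →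
    UTy.absAux y c (UTy.subst c (.var y) A) = A
  | .var n, c, hf => by
      have hf' : n ≠ y + c + 1 := by
        intro h; exact hf (by simpa [UTy.Free] using h)
      rcases Nat.lt_trichotomy n c with h | h | h
      · simp [UTy.subst, UTy.absAux, show ¬ n = c by omega, show ¬ c < n by omega,
          show ¬ n = y + c by omega, show ¬ c ≤ n by omega]
      · subst h
        simp [UTy.subst, UTy.shift, UTy.absAux]
      · simp [UTy.subst, UTy.absAux, show ¬ n = c by omega, h,
          show ¬ n - 1 = y + c by omega, show c ≤ n - 1 by omega,
          show n - 1 + 1 = n by omega]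
  | .arrow U T, c, hf => by
      have hU : ¬ UTy.Free (y + c + 1) U := fun h => hf (Or.inl h)
      have hT : ¬ Ty.Free (y + c + 1) T := fun h => hf (Or.inr h)
      simp [UTy.subst, UTy.absAux, uabs_subst_cancel U c hU, tabs_subst_cancel T c hT]
  | .all U, c, hf => by
      have hU : ¬ UTy.Free (y + (c + 1) + 1) U := by
        intro h; exact hf (show UTy.Free (y + c + 1) (.all U) from by
          simpa [UTy.Free, show y + c + 1 + 1 = y + (c+1) + 1 by omega] using h)
      simp [UTy.subst, UTy.absAux, uabs_subst_cancel U (c + 1) hU]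
theorem tabs_subst_cancel {y : ℕ} : ∀ (A : Ty) (c : ℕ), ¬ Ty.Free (y + c + 1) A →
    Ty.absAux y c (Ty.subst c (.var y) A) = A
  | .unit U, c, hf => by
      simp [Ty.subst, Ty.absAux, uabs_subst_cancel U c (fun h => hf h)]
  | .add T R, c, hf => by
      have hT : ¬ Ty.Free (y + c + 1) T := fun h => hf (Or.inl h)
      have hR : ¬ Ty.Free (y + c + 1) R := fun h => hf (Or.inr h)
      simp [Ty.subst, Ty.absAux, tabs_subst_cancel T c hT, tabs_subst_cancel R c hR]
  | .zero, _, _ => by simp [Ty.subst, Ty.absAux]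
end

mutual
theorem ufree_bound : ∀ (A : UTy), ∃ N, ∀ m, N ≤ m → ¬ UTy.Free m A
  | .var n => ⟨n + 1, fun m hm h => by simp [UTy.Free] at h; omega⟩
  | .arrow U T => by
      obtain ⟨N1, h1⟩ := ufree_bound U
      obtain ⟨N2, h2⟩ := tfree_bound T
      exact ⟨max N1 N2, fun m hm h => by
        rcases h with h | h
        · exact h1 m (le_trans (le_max_left _ _) hm) h
        · exact h2 m (le_trans (le_max_right _ _) hm) h⟩
  | .all U => by
      obtain ⟨N, h⟩ := ufree_bound U
      exact ⟨N, fun m hm hf => h (m + 1) (by omega) hf⟩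
theorem tfree_bound : ∀ (A : Ty), ∃ N, ∀ m, N ≤ m → ¬ Ty.Free m A
  | .unit U => ufree_bound U
  | .add T R => by
      obtain ⟨N1, h1⟩ := tfree_bound T
      obtain ⟨N2, h2⟩ := tfree_bound R
      exact ⟨max N1 N2, fun m hm h => by
        rcases h with h | h
        · exact h1 m (le_trans (le_max_left _ _) hm) h
        · exact h2 m (le_trans (le_max_right _ _) hm) h⟩
  | .zero => ⟨0, fun m _ h => h⟩
end

theorem ueq_teq_subst :
    (∀ {U U' : UTy}, UEq U U' → ∀ (k : ℕ) (V : UTy),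
      UEq (UTy.subst k V U) (UTy.subst k V U')) ∧
    (∀ {T T' : Ty}, TEq T T' → ∀ (k : ℕ) (V : UTy),
      TEq (Ty.subst k V T) (Ty.subst k V T')) := by
  constructor
  · intro U U' h
    refine UEq.rec (motive_1 := fun U U' _ => ∀ (k : ℕ) (V : UTy),
        UEq (UTy.subst k V U) (UTy.subst k V U'))
      (motive_2 := fun T T' _ => ∀ (k : ℕ) (V : UTy),
        TEq (Ty.subst k V T) (Ty.subst k V T'))
      ?_ ?_ ?_ ?_ ?_ ?_ ?_ ?_ ?_ ?_ ?_ ?_ ?_ h <;>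
    · intros
      try simp only [UTy.subst, Ty.subst]
      solve_by_elim (maxDepth := 6) [UEq.refl, UEq.symm, UEq.trans, UEq.arrow, UEq.all,
        TEq.refl, TEq.symm, TEq.trans, TEq.unit, TEq.addCongr, TEq.comm, TEq.assoc,
        TEq.zero]
  · intro T T' h
    refine TEq.rec (motive_1 := fun U U' _ => ∀ (k : ℕ) (V : UTy),
        UEq (UTy.subst k V U) (UTy.subst k V U'))
      (motive_2 := fun T T' _ => ∀ (k : ℕ) (V : UTy),
        TEq (Ty.subst k V T) (Ty.subst k V T'))
      ?_ ?_ ?_ ?_ ?_ ?_ ?_ ?_ ?_ ?_ ?_ ?_ ?_ h <;>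
    · intros
      try simp only [UTy.subst, Ty.subst]
      solve_by_elim (maxDepth := 6) [UEq.refl, UEq.symm, UEq.trans, UEq.arrow, UEq.all,
        TEq.refl, TEq.symm, TEq.trans, TEq.unit, TEq.addCongr, TEq.comm, TEq.assoc,
        TEq.zero]

theorem ueq_subst {U U' : UTy} (h : UEq U U') (k : ℕ) (V : UTy) :
    UEq (UTy.subst k V U) (UTy.subst k V U') := ueq_teq_subst.1 h k V

theorem teq_subst {T T' : Ty} (h : TEq T T') (k : ℕ) (V : UTy) :
    TEq (Ty.subst k V T) (Ty.subst k V T') := ueq_teq_subst.2 h k V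

theorem allN_subst (V : UTy) : ∀ (m k : ℕ) (W : UTy),
    UTy.subst k V (allN m W) = allN m (UTy.subst (k + m) V W)
  | 0, k, W => by simp [allN]
  | m + 1, k, W => by
      simp only [allN, UTy.subst, allN_subst V m (k + 1) W]
      rw [show k + 1 + m = k + (m + 1) by omega]

theorem foldl_add_subst (k : ℕ) (V : UTy) : ∀ (L : List Ty) (acc : Ty),
    Ty.subst k V (L.foldl Ty.add acc)
      = (L.map (Ty.subst k V)).foldl Ty.add (Ty.subst k V acc)
  | [], acc => by simp
  | T :: L, acc => by
      simp only [List.foldl, List.map]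
      rw [foldl_add_subst k V L (acc.add T)]
      rfl

theorem sumT_subst (k : ℕ) (V : UTy) (L : List Ty) :
    Ty.subst k V (sumT L) = sumT (L.map (Ty.subst k V)) := by
  simpa [sumT, Ty.subst] using foldl_add_subst k V L .zero

/-- Indexed substitution on a list of unit types for `msubst`-commutation. -/
def substVec (k : ℕ) (V : UTy) : List UTy → List UTy
  | [] => []
  | W :: Ws => UTy.subst (k + Ws.length) V W :: substVec k V Ws

theorem substVec_length (k : ℕ) (V : UTy) : ∀ Ws, (substVec k V Ws).length = Ws.length
  | [] => rfl
  | _ :: Ws => by simp [substVec, substVec_length k V Ws]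

theorem msubstT_subst (V : UTy) : ∀ (Vs : List UTy) (A : Ty) (k : ℕ),
    Ty.subst k V (Ty.msubst Vs A)
      = Ty.msubst (substVec k V Vs) (Ty.subst (k + Vs.length) V A)
  | [], A, k => by simp [Ty.msubst, substVec]
  | W :: Ws, A, k => by
      show Ty.subst k V (Ty.msubst Ws (Ty.subst 0 W A)) = _
      rw [msubstT_subst V Ws (Ty.subst 0 W A) k]
      have h := tsubst_subst (V := V) (W := W) A 0 (k + Ws.length)
      rw [Nat.add_zero] at h
      rw [h]
      rfl


theorem msubstU_subst (V : UTy) : ∀ (Vs : List UTy) (A : UTy) (k : ℕ),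
    UTy.subst k V (UTy.msubst Vs A)
      = UTy.msubst (substVec k V Vs) (UTy.subst (k + Vs.length) V A)
  | [], A, k => by simp [UTy.msubst, substVec]
  | W :: Ws, A, k => by
      show UTy.subst k V (UTy.msubst Ws (UTy.subst 0 W A)) = _
      rw [msubstU_subst V Ws (UTy.subst 0 W A) k]
      have h := usubst_subst (V := V) (W := W) A 0 (k + Ws.length)
      rw [Nat.add_zero] at h
      rw [h]
      rfl


theorem liftCtx_subst (Γ : List UTy) (k : ℕ) (V : UTy) :
    (liftCtx Γ).map (UTy.subst (k + 1) V) = liftCtx (Γ.map (UTy.subst k V)) := by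
  simp only [liftCtx, List.map_map]
  apply List.map_congr_left
  intro A _
  show UTy.subst (k + 1) V (UTy.shift 1 0 A) = UTy.shift 1 0 (UTy.subst k V A)
  have h := usubst_shift (V := V) A 0 k 1
  rw [show 1 + (k + 0) = k + 1 from by omega, Nat.add_zero] at h
  exact h

/-- Type substitution preserves typing. -/
theorem typing_subst {Γ : List UTy} {s : Tm} {T : Ty} (h : Typing Γ s T) :
    ∀ (k : ℕ) (V : UTy), Typing (Γ.map (UTy.subst k V)) s (Ty.subst k V T) := by
  induction h with
  | ax hget => exact fun k V => Typing.ax (by simp [hget])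
  | axZero => exact fun k V => Typing.axZero
  | equiv _ he ih => exact fun k V => (ih k V).equiv (teq_subst he k V)
  | arrI _ ih => exact fun k V => Typing.arrI (ih k V)
  | addI _ _ ih1 ih2 => exact fun k V => Typing.addI (ih1 k V) (ih2 k V)
  | @allE Γ t U V0 _ ih =>
      intro k V
      have h1 := Typing.allE (UTy.subst k V V0) (ih k V)
      have h2 := usubst_subst (V := V) (W := V0) U 0 k
      rw [Nat.add_zero] at h2
      show Typing _ t (Ty.unit (UTy.subst k V (UTy.subst 0 V0 U)))
      rw [h2]
      exact h1
  | @allI Γ t U _ ih =>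
      intro k V
      apply Typing.allI
      have := ih (k + 1) V
      rwa [liftCtx_subst] at this
  | @arrE Γ t u m U Ts Vs hTs hVs hlen _ _ ih1 ih2 =>
      intro k V
      have key := Typing.arrE (Γ := Γ.map (UTy.subst k V)) (t := t) (u := u)
        (k := m) (U := UTy.subst (k + m) V U)
        (Ts := Ts.map (Ty.subst (k + m) V)) (Vs := Vs.map (substVec k V))
        (by simpa using hTs) (by simpa using hVs)
        (by intro W hW
            simp only [List.mem_map] at hW
            obtain ⟨W', hW', rfl⟩ := hW
            rw [substVec_length]
            exact hlen W' hW')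
        (by have h1 := ih1 k V
            rw [sumT_subst] at h1
            convert h1 using 2
            rw [List.map_map, List.map_map]
            apply List.map_congr_left
            intro Ti _
            show Ty.unit (allN m (.arrow (UTy.subst (k+m) V U) (Ty.subst (k+m) V Ti)))
              = Ty.subst k V (Ty.unit (allN m (.arrow U Ti)))
            show _ = Ty.unit (UTy.subst k V (allN m (.arrow U Ti)))
            rw [allN_subst]
            rfl)
        (by have h2 := ih2 k V
            rw [sumT_subst] at h2
            convert h2 using 2
            rw [List.map_map, List.map_map]
            apply List.map_congr_left
            intro Vj hVj
            show Ty.unit (UTy.msubst (substVec k V Vj) (UTy.subst (k+m) V U))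
              = Ty.subst k V (Ty.unit (UTy.msubst Vj U))
            show _ = Ty.unit (UTy.subst k V (UTy.msubst Vj U))
            rw [msubstU_subst, hlen Vj hVj])
      convert key using 1
      rw [sumT_subst]
      congr 1
      rw [List.map_flatten, List.map_map, List.map_map]
      congr 1
      apply List.map_congr_left
      intro Ti _
      show (Vs.map fun Vj => Ty.msubst Vj Ti).map (Ty.subst k V)
        = (Vs.map (substVec k V)).map fun Vj => Ty.msubst Vj (Ty.subst (k+m) V Ti)
      rw [List.map_map, List.map_map]
      apply List.map_congr_left
      intro Vj hVj
      show Ty.subst k V (Ty.msubst Vj Ti) = Ty.msubst (substVec k V Vj) (Ty.subst (k+m) V Ti)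
      rw [msubstT_subst, hlen Vj hVj]

theorem ssub_subst {U1 U2 : UTy} (h : SSub U1 U2) (k : ℕ) :
    ∃ N, ∀ y, N ≤ y → SSub (UTy.subst k (.var y) U1) (UTy.subst k (.var y) U2) := by
  cases h with
  | gen X hUeq =>
      obtain ⟨N1, hN1⟩ := ufree_bound U1
      refine ⟨max (X + 1) N1, fun y hy => ?_⟩
      apply SSub.gen (renX k y X)
      have h1 := ueq_subst hUeq k (.var y)
      have h2 : UTy.subst k (.var y) (UTy.genAll X U1)
          = UTy.genAll (renX k y X) (UTy.subst k (.var y) U1) := by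
        show UTy.subst k (.var y) (.all (UTy.absAux X 0 U1)) = _
        have := uabs_subst (y := y) (X := X) (by omega) U1 0 k
          (hN1 _ (by omega))
        simp only [UTy.subst]
        rw [show k + 1 + 0 = k + 1 from rfl, show k + 0 = k from rfl] at this
        rw [this]
        rfl
      rwa [h2] at h1
  | inst U' V h1 h2 =>
      refine ⟨0, fun y _ => ?_⟩
      apply SSub.inst (UTy.subst (k + 1) (.var y) U') (UTy.subst k (.var y) V)
      · have := ueq_subst h1 k (.var y)
        simpa [UTy.subst] using this
      · have h3 := ueq_subst h2 k (.var y)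
        have h4 := usubst_subst (V := UTy.var y) (W := V) U' 0 k
        rw [Nat.add_zero] at h4
        rwa [h4] at h3

theorem tpre_subst {T R : Ty} (h : TPre T R) (k : ℕ) :
    ∃ N, ∀ y, N ≤ y → TPre (Ty.subst k (.var y) T) (Ty.subst k (.var y) R) := by
  induction h with
  | ofEq he => exact ⟨0, fun y _ => .ofEq (teq_subst he k _)⟩
  | ofSSub hs =>
      obtain ⟨N, hN⟩ := ssub_subst hs k
      exact ⟨N, fun y hy => .ofSSub (hN y hy)⟩
  | trans _ _ ih1 ih2 =>
      obtain ⟨N1, h1⟩ := ih1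
      obtain ⟨N2, h2⟩ := ih2
      exact ⟨max N1 N2, fun y hy =>
        (h1 y (le_trans (le_max_left _ _) hy)).trans (h2 y (le_trans (le_max_right _ _) hy))⟩

theorem liftCtx_cancel (Γ : List UTy) (V : UTy) :
    (liftCtx Γ).map (UTy.subst 0 V) = Γ := by
  simp only [liftCtx, List.map_map]
  have : ∀ A : UTy, UTy.subst 0 V (UTy.shift 1 0 A) = A := by
    intro A
    have := usubst_shift_cancel (X := V) A 0 0 0 (le_refl _) (by omega)
    rwa [ushift_zero] at this
  calc Γ.map (UTy.subst 0 V ∘ UTy.shift 1 0) = Γ.map id := by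
        apply List.map_congr_left; intro A _; exact this A
    _ = Γ := List.map_id Γ

theorem generation_aux {Γ : List UTy} {s : Tm} {T : Ty} (h : Typing Γ s T) :
    ∀ t : Tm, s = .lam t →
      ∃ (U : UTy) (R : Ty), Typing (U :: Γ) t R ∧ TPre (.unit (.arrow U R)) T := by
  induction h with
  | ax _ => exact fun t ht => nomatch ht
  | axZero => exact fun t ht => nomatch ht
  | equiv _ he ih =>
      intro t ht
      obtain ⟨U, R, h1, h2⟩ := ih t ht
      exact ⟨U, R, h1, h2.trans (.ofEq he)⟩
  | @arrI Γ U t0 T0 hb _ =>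
      intro t ht
      cases ht
      exact ⟨U, T0, hb, .ofEq (.refl _)⟩
  | arrE _ _ _ _ _ _ _ => exact fun t ht => nomatch ht
  | addI _ _ _ _ => exact fun t ht => nomatch ht
  | @allE Γ s0 U0 V0 _ ih =>
      intro t ht
      obtain ⟨U, R, h1, h2⟩ := ih t ht
      exact ⟨U, R, h1, h2.trans (.ofSSub (SSub.inst U0 V0 (UEq.refl _) (UEq.refl _)))⟩
  | @allI Γ s0 U0 hU ih =>
      intro t ht
      obtain ⟨W, R, h1, h2⟩ := ih t ht
      obtain ⟨N2, hN2⟩ := tpre_subst h2 0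
      obtain ⟨N3, hN3⟩ := ufree_bound U0
      set y := max N2 N3 with hy
      have hty := typing_subst h1 0 (.var y)
      rw [List.map_cons, liftCtx_cancel] at hty
      refine ⟨UTy.subst 0 (.var y) W, Ty.subst 0 (.var y) R, hty, ?_⟩
      have p1 := hN2 y (le_max_left _ _)
      have hfree : ¬ UTy.Free (y + 0 + 1) U0 := hN3 _ (by omega)
      have cancel : UTy.absAux y 0 (UTy.subst 0 (.var y) U0) = U0 :=
        uabs_subst_cancel U0 0 hfree
      have step : SSub (UTy.subst 0 (.var y) U0) (.all U0) := by
        apply SSub.gen y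
        rw [UTy.genAll, cancel]
        exact UEq.refl _
      exact p1.trans (TPre.ofSSub step)

end GenLam


/-- **Generation lemma for abstractions** (Lemma 7.2).  If `Γ ⊢ λx.t : T` then
`Γ, x:U ⊢ t : R` for some types `U`, `R` such that `U→R ≼ T`. -/
theorem generation_lam {Γ : List UTy} {t : Tm} {T : Ty}
    (h : Typing Γ (.lam t) T) :
    ∃ (U : UTy) (R : Ty), Typing (U :: Γ) t R ∧ TPre (.unit (.arrow U R)) T :=
  GenLam.generation_aux h t rfl
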